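/- arXiv:2412.01580 — 2 statements merged into one kernel-verified Lean document; each statement's English description precedes it below -/
import Mathlib

section
/- Let H be a real Hilbert space and H₁, H₂ : H → H operators. Suppose there exists γ > 0 such that the distance between SRG(H₁)⁻¹ := {z⁻¹ : z ∈ SRG(H₁)} and −chord(SRG(H₂)) (the negation of the chord-property closure of SRG(H₂)) is at least 1/γ. Then for any u₁, u₂ in the domain of the feedback relation [H₁, H₂] with yᵢ the corresponding outputs (yᵢ such that (uᵢ, yᵢ) ∈ (H₁⁻¹ + H₂)⁻¹), one has ‖y₁ − y₂‖ ≤ γ‖u₁ − u₂‖. -/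
/-!
**Statement 7** (SRG separation bound).  Let `H₁, H₂ : H → H` be operators on a real
Hilbert space and `γ > 0`, and suppose `dist(SRG(H₁)⁻¹, -chord(SRG(H₂))) ≥ 1/γ`.
Then for any `u₁, u₂` in the domain of `[H₁, H₂] = (H₁⁻¹ + H₂)⁻¹`, with `y₁, y₂` the
corresponding outputs, `‖y₁ - y₂‖ ≤ γ ‖u₁ - u₂‖`.

The distance hypothesis is expressed pointwise: for every `z ∈ SRG(H₁)` and every `w` in
the chord-closure of `SRG(H₂)`, the distance from `z⁻¹` to `-w` is at least `1/γ`; a point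
`z = 0` of `SRG(H₁)` inverts to `∞`, which is at infinite distance from every finite
point, so it is excluded by the guard `z ≠ 0`.
-/

open InnerProductGeometry

variable {H : Type*} [NormedAddCommGroup H] [InnerProductSpace ℝ H]

/-- The Scaled Relative Graph of a relation `R ⊆ H × H` (finite part). -/
noncomputable def srg (R : Set (H × H)) : Set ℂ :=
  {w | ∃ u₁ y₁ u₂ y₂, (u₁, y₁) ∈ R ∧ (u₂, y₂) ∈ R ∧ u₁ ≠ u₂ ∧
    (w = (‖y₁ - y₂‖ / ‖u₁ - u₂‖ : ℝ) *
        Complex.exp (Complex.I * (angle (u₁ - u₂) (y₁ - y₂) : ℝ)) ∨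
     w = (‖y₁ - y₂‖ / ‖u₁ - u₂‖ : ℝ) *
        Complex.exp (-(Complex.I * (angle (u₁ - u₂) (y₁ - y₂) : ℝ))))}

/-- A set `G ⊆ ℂ` satisfies the chord property if for each `z ∈ G` the segment between
`z` and its conjugate lies in `G`. -/
def ChordProperty (G : Set ℂ) : Prop :=
  ∀ z ∈ G, ∀ l ∈ Set.Icc (0 : ℝ) 1,
    (l : ℂ) * z + (1 - (l : ℂ)) * (starRingEnd ℂ) z ∈ G

/-- The chord-property closure: the smallest superset with the chord property. -/
def chordClosure (G : Set ℂ) : Set ℂ := ⋂₀ {S | G ⊆ S ∧ ChordProperty S}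

/-- The graph of an operator. -/
def graphOf (F : H → H) : Set (H × H) := {p | p.2 = F p.1}

/-- Relational inverse. -/
def relInv (R : Set (H × H)) : Set (H × H) := {p | (p.2, p.1) ∈ R}

/-- Relational sum. -/
def relAdd (R S : Set (H × H)) : Set (H × H) :=
  {p | ∃ y z, (p.1, y) ∈ R ∧ (p.1, z) ∈ S ∧ p.2 = y + z}

/-- The feedback relation `[H₁, H₂] := (H₁⁻¹ + H₂)⁻¹`. -/
def feedbackRel (H₁ H₂ : H → H) : Set (H × H) :=
  relInv (relAdd (relInv (graphOf H₁)) (graphOf H₂))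


lemma rexp_re (r θ : ℝ) :
    ((r : ℂ) * Complex.exp (Complex.I * (θ : ℂ))).re = r * Real.cos θ := by
  rw [mul_comm Complex.I, Complex.re_ofReal_mul, Complex.exp_ofReal_mul_I_re]

lemma rexp_im (r θ : ℝ) :
    ((r : ℂ) * Complex.exp (Complex.I * (θ : ℂ))).im = r * Real.sin θ := by
  rw [mul_comm Complex.I, Complex.im_ofReal_mul, Complex.exp_ofReal_mul_I_im]

lemma rexp_neg_re (r θ : ℝ) :
    ((r : ℂ) * Complex.exp (-(Complex.I * (θ : ℂ)))).re = r * Real.cos θ := by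
  have : -(Complex.I * (θ : ℂ)) = Complex.I * ((-θ : ℝ) : ℂ) := by push_cast; ring
  rw [this, rexp_re, Real.cos_neg]

lemma rexp_neg_im (r θ : ℝ) :
    ((r : ℂ) * Complex.exp (-(Complex.I * (θ : ℂ)))).im = -(r * Real.sin θ) := by
  have : -(Complex.I * (θ : ℂ)) = Complex.I * ((-θ : ℝ) : ℂ) := by push_cast; ring
  rw [this, rexp_im, Real.sin_neg]; ring

lemma exp_I_re (θ : ℝ) : (Complex.exp (Complex.I * (θ : ℂ))).re = Real.cos θ := by
  rw [mul_comm]; exact Complex.exp_ofReal_mul_I_re θ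

lemma exp_I_im (θ : ℝ) : (Complex.exp (Complex.I * (θ : ℂ))).im = Real.sin θ := by
  rw [mul_comm]; exact Complex.exp_ofReal_mul_I_im θ

lemma rexp_inv {r : ℝ} (hr : r ≠ 0) (θ : ℝ) :
    ((r : ℂ) * Complex.exp (-(Complex.I * (θ : ℂ))))⁻¹
      = ((r⁻¹ : ℝ) : ℂ) * Complex.exp (Complex.I * (θ : ℂ)) := by
  apply inv_eq_of_mul_eq_one_right
  rw [show ((r : ℂ) * Complex.exp (-(Complex.I * (θ : ℂ)))) * (((r⁻¹ : ℝ) : ℂ) * Complex.exp (Complex.I * (θ : ℂ)))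
      = ((r : ℂ) * ((r⁻¹ : ℝ) : ℂ)) * (Complex.exp (-(Complex.I * (θ : ℂ))) * Complex.exp (Complex.I * (θ : ℂ))) by ring,
    ← Complex.exp_add, ← Complex.ofReal_mul]
  simp [mul_inv_cancel₀ hr]

/-- norm of component orthogonal to `d`, scaled by `‖d‖`. -/
noncomputable def rho (d x : H) : ℝ := Real.sqrt (‖x‖^2 * ‖d‖^2 - (inner ℝ x d : ℝ)^2)

lemma rho_nonneg (d x : H) : 0 ≤ rho d x := Real.sqrt_nonneg _

lemma rho_sq (d x : H) : rho d x ^ 2 = ‖x‖^2 * ‖d‖^2 - (inner ℝ x d : ℝ)^2 := by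
  have h := abs_real_inner_le_norm x d
  have h2 : (inner ℝ x d : ℝ)^2 ≤ ‖x‖^2 * ‖d‖^2 := by
    nlinarith [abs_nonneg (inner ℝ x d : ℝ), sq_abs (inner ℝ x d : ℝ)]
  exact Real.sq_sqrt (by linarith)

lemma rho_neg (d x : H) : rho d (-x) = rho d x := by
  simp only [rho, norm_neg, inner_neg_left, neg_neg]
  ring_nf

lemma rho_comm (d x : H) : rho d x = rho x d := by
  simp only [rho, real_inner_comm x d]
  ring_nf

lemma rho_eq {d : H} (hd : d ≠ 0) (x : H) :
    rho d x = ‖x - ((inner ℝ x d : ℝ) / ‖d‖^2) • d‖ * ‖d‖ := by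
  have hn : (0:ℝ) < ‖d‖ := norm_pos_iff.mpr hd
  have hsm : ‖((inner ℝ x d : ℝ)/‖d‖^2) • d‖^2 = ((inner ℝ x d : ℝ)/‖d‖^2)^2 * ‖d‖^2 := by
    rw [norm_smul, mul_pow, Real.norm_eq_abs, sq_abs]
  have h2 : ‖x - ((inner ℝ x d : ℝ)/‖d‖^2) • d‖^2 = ‖x‖^2 - (inner ℝ x d : ℝ)^2/‖d‖^2 := by
    rw [norm_sub_sq_real, real_inner_smul_right, hsm]
    field_simp
    ring
  have h3 : ‖x‖^2 * ‖d‖^2 - (inner ℝ x d : ℝ)^2 = (‖x - ((inner ℝ x d : ℝ)/‖d‖^2) • d‖ * ‖d‖)^2 := by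
    rw [mul_pow, h2]
    field_simp
  rw [rho, h3, Real.sqrt_sq (by positivity)]

lemma rho_add_le {d : H} (hd : d ≠ 0) (x y : H) :
    rho d (x + y) ≤ rho d x + rho d y := by
  rw [rho_eq hd, rho_eq hd, rho_eq hd]
  have hsplit : x + y - (((inner ℝ (x+y) d : ℝ))/‖d‖^2) • d
      = (x - ((inner ℝ x d : ℝ)/‖d‖^2) • d) + (y - ((inner ℝ y d : ℝ)/‖d‖^2) • d) := by
    rw [inner_add_left, add_div, add_smul]; abel
  rw [hsplit, ← add_mul]
  exact mul_le_mul_of_nonneg_right (norm_add_le _ _) (norm_nonneg _)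

lemma sin_angle_eq_rho (x d : H) :
    Real.sin (angle x d) * (‖x‖ * ‖d‖) = rho d x := by
  rw [sin_angle_mul_norm_mul_norm, rho]
  congr 1
  rw [real_inner_self_eq_norm_sq, real_inner_self_eq_norm_sq]
  ring

theorem srg_separation_bound (H₁ H₂ : H → H) (γ : ℝ) (hγ : 0 < γ)
    (hsep : ∀ z ∈ srg (graphOf H₁), z ≠ 0 →
      ∀ w ∈ chordClosure (srg (graphOf H₂)), 1 / γ ≤ ‖z⁻¹ - (-w)‖) :
    ∀ u₁ y₁ u₂ y₂ : H,
      (u₁, y₁) ∈ feedbackRel H₁ H₂ → (u₂, y₂) ∈ feedbackRel H₁ H₂ →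
      ‖y₁ - y₂‖ ≤ γ * ‖u₁ - u₂‖ := by
  intro u₁ y₁ u₂ y₂ h1 h2
  obtain ⟨a₁, b₁, ha₁, hb₁, hu₁⟩ := h1
  obtain ⟨a₂, b₂, ha₂, hb₂, hu₂⟩ := h2
  have ha₁' : y₁ = H₁ a₁ := ha₁
  have ha₂' : y₂ = H₁ a₂ := ha₂
  have hb₁' : b₁ = H₂ y₁ := hb₁
  have hb₂' : b₂ = H₂ y₂ := hb₂
  by_cases hy : y₁ = y₂
  · rw [hy, sub_self, norm_zero]; positivity
  have hΔy : y₁ - y₂ ≠ 0 := sub_ne_zero.mpr hy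
  have hn : (0:ℝ) < ‖y₁ - y₂‖ := norm_pos_iff.mpr hΔy
  have ha : a₁ ≠ a₂ := by intro h; exact hy (by rw [ha₁', ha₂', h])
  have hΔv : a₁ - a₂ ≠ 0 := sub_ne_zero.mpr ha
  have hnv : (0:ℝ) < ‖a₁ - a₂‖ := norm_pos_iff.mpr hΔv
  have hu₁'' : u₁ = a₁ + b₁ := hu₁
  have hu₂'' : u₂ = a₂ + b₂ := hu₂
  have hΔu : u₁ - u₂ = (a₁ - a₂) + (b₁ - b₂) := by rw [hu₁'', hu₂'']; abel
  set Δy := y₁ - y₂ with hΔydef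
  set Δv := a₁ - a₂ with hΔvdef
  set Δw := b₁ - b₂ with hΔwdef
  set n := ‖Δy‖ with hndef
  set θ₁ := angle Δv Δy with hθ₁def
  set θ₂ := angle Δy Δw with hθ₂def
  set A := rho Δy Δv with hAdef
  set B := rho Δy Δw with hBdef
  set C := rho Δy (Δv + Δw) with hCdef
  have hA0 : 0 ≤ A := rho_nonneg _ _
  have hB0 : 0 ≤ B := rho_nonneg _ _
  have hC1 : C ≤ A + B := rho_add_le hΔy Δv Δw
  have hA1 : A ≤ C + B := by
    have h := rho_add_le hΔy (Δv + Δw) (-Δw)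
    rw [show Δv + Δw + -Δw = Δv by abel, rho_neg] at h
    exact h
  set t : ℝ := if B = 0 then 0 else (C - A)/B with htdef
  have htB : A + t * B = C := by
    by_cases hB' : B = 0
    · rw [htdef, if_pos hB', hB']
      rw [hB'] at hC1 hA1
      linarith
    · have hBp : 0 < B := lt_of_le_of_ne hB0 (Ne.symm hB')
      rw [htdef, if_neg hB']
      field_simp
      ring
  have ht1 : -1 ≤ t := by
    by_cases hB' : B = 0
    · rw [htdef, if_pos hB']; norm_num
    · have hBp : 0 < B := lt_of_le_of_ne hB0 (Ne.symm hB')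
      rw [htdef, if_neg hB', le_div_iff₀ hBp]
      linarith
  have ht2 : t ≤ 1 := by
    by_cases hB' : B = 0
    · rw [htdef, if_pos hB']; norm_num
    · have hBp : 0 < B := lt_of_le_of_ne hB0 (Ne.symm hB')
      rw [htdef, if_neg hB', div_le_one hBp]
      linarith
  set l : ℝ := (t + 1)/2 with hldef
  have hl : l ∈ Set.Icc (0:ℝ) 1 := ⟨by rw [hldef]; linarith, by rw [hldef]; linarith⟩
  -- the SRG points
  set z : ℂ := ((n / ‖Δv‖ : ℝ) : ℂ) * Complex.exp (-(Complex.I * (θ₁ : ℂ))) with hzdef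
  have hz : z ∈ srg (graphOf H₁) := ⟨a₁, y₁, a₂, y₂, ha₁', ha₂', ha, Or.inr rfl⟩
  have hrpos : (0:ℝ) < n / ‖Δv‖ := div_pos hn hnv
  have hzne : z ≠ 0 :=
    mul_ne_zero (Complex.ofReal_ne_zero.mpr (ne_of_gt hrpos)) (Complex.exp_ne_zero _)
  have hzinv : z⁻¹ = ((‖Δv‖ / n : ℝ) : ℂ) * Complex.exp (Complex.I * (θ₁ : ℂ)) := by
    rw [hzdef, rexp_inv (ne_of_gt hrpos), inv_div]
  set w₂ : ℂ := ((‖Δw‖ / n : ℝ) : ℂ) * Complex.exp (Complex.I * (θ₂ : ℂ)) with hw₂def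
  have hw₂ : w₂ ∈ srg (graphOf H₂) := ⟨y₁, b₁, y₂, b₂, hb₁', hb₂', hy, Or.inl rfl⟩
  set w : ℂ := (l : ℂ) * w₂ + (1 - (l:ℂ)) * (starRingEnd ℂ) w₂ with hwdef
  have hw : w ∈ chordClosure (srg (graphOf H₂)) := fun S hS => hS.2 w₂ (hS.1 hw₂) l hl
  have hkey := hsep z hz hzne w hw
  rw [sub_neg_eq_add] at hkey
  -- compute real and imaginary parts
  have hcast : (1 - (l:ℂ)) = ((1 - l : ℝ) : ℂ) := by push_cast; ring
  have hre : (z⁻¹ + w).re = ‖Δv‖/n * Real.cos θ₁ + ‖Δw‖/n * Real.cos θ₂ := by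
    rw [hzinv, hwdef, hw₂def, hcast]
    simp only [Complex.add_re, Complex.re_ofReal_mul, Complex.conj_re, exp_I_re]
    ring
  have him : (z⁻¹ + w).im = ‖Δv‖/n * Real.sin θ₁ + t * (‖Δw‖/n * Real.sin θ₂) := by
    rw [hzinv, hwdef, hw₂def, hcast]
    simp only [Complex.add_im, Complex.im_ofReal_mul, Complex.conj_im, exp_I_im]
    rw [hldef]
    ring
  -- identities with inner products
  have hnne : n ≠ 0 := ne_of_gt hn
  have hip_v : Real.cos θ₁ * (‖Δv‖ * n) = (inner ℝ Δv Δy : ℝ) :=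
    cos_angle_mul_norm_mul_norm Δv Δy
  have hip_w : Real.cos θ₂ * (n * ‖Δw‖) = (inner ℝ Δy Δw : ℝ) :=
    cos_angle_mul_norm_mul_norm Δy Δw
  have hs_v : Real.sin θ₁ * (‖Δv‖ * n) = A := sin_angle_eq_rho Δv Δy
  have hs_w : Real.sin θ₂ * (n * ‖Δw‖) = B := by
    rw [hθ₂def, sin_angle_eq_rho Δy Δw, hBdef, rho_comm]
  have hipadd : (inner ℝ (Δv + Δw) Δy : ℝ) = (inner ℝ Δv Δy : ℝ) + (inner ℝ Δw Δy : ℝ) :=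
    inner_add_left Δv Δw Δy
  have hre' : (z⁻¹ + w).re = (inner ℝ (Δv + Δw) Δy : ℝ) / n^2 := by
    have e1 : ‖Δv‖/n * Real.cos θ₁ = (inner ℝ Δv Δy : ℝ)/n^2 := by
      rw [← hip_v]; field_simp
    have e2 : ‖Δw‖/n * Real.cos θ₂ = (inner ℝ Δw Δy : ℝ)/n^2 := by
      rw [real_inner_comm Δy Δw, ← hip_w]; field_simp
    rw [hre, e1, e2, hipadd, add_div]
  have him' : (z⁻¹ + w).im = C / n^2 := by
    have e1 : ‖Δv‖/n * Real.sin θ₁ = A/n^2 := by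
      rw [← hs_v]; field_simp
    have e2 : ‖Δw‖/n * Real.sin θ₂ = B/n^2 := by
      rw [← hs_w]; field_simp
    rw [him, e1, e2, ← htB]
    ring
  have hCsq : C^2 = ‖Δv + Δw‖^2 * n^2 - (inner ℝ (Δv + Δw) Δy : ℝ)^2 := rho_sq Δy (Δv + Δw)
  have habs : ‖z⁻¹ + w‖ = ‖Δv + Δw‖ / n := by
    rw [Complex.norm_def, Complex.normSq_apply, hre', him']
    have hnum : (inner ℝ (Δv + Δw) Δy : ℝ)^2 + C^2 = ‖Δv + Δw‖^2 * n^2 := by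
      rw [hCsq]; ring
    have hsum : (inner ℝ (Δv + Δw) Δy : ℝ)/n^2 * ((inner ℝ (Δv + Δw) Δy : ℝ)/n^2) + C/n^2 * (C/n^2)
        = (‖Δv + Δw‖/n)^2 := by
      rw [show (inner ℝ (Δv + Δw) Δy : ℝ)/n^2 * ((inner ℝ (Δv + Δw) Δy : ℝ)/n^2) + C/n^2 * (C/n^2)
          = ((inner ℝ (Δv + Δw) Δy : ℝ)^2 + C^2)/(n^2 * n^2) from by ring, hnum]
      field_simp
    rw [hsum, Real.sqrt_sq (by positivity)]
  rw [habs] at hkey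
  rw [hΔu]
  rw [div_le_div_iff₀ hγ hn] at hkey
  linarith
end

section
/- Let ψ : (−π/2, π/2) → ℝ be ψ(x) = x − tan(x), and define the operator Ψ on the set D ⊆ L²([0,∞); ℝ) of functions taking values in (−π/2, π/2) by (Ψy)(t) = ψ(y(t)). Then Ψ⁻¹ (equivalently, the unity negative feedback interconnection of N(u)(t) = −arctan(u(t))) has infinite incremental gain: for every γ > 0 there exist y₁, y₂ ∈ D with Ψy₁, Ψy₂ ∈ L², Ψy₁ ≠ Ψy₂, and ‖y₁ − y₂‖ > γ‖Ψy₁ − Ψy₂‖. In particular such y₁, y₂ may be chosen as constant multiples of the indicator function of [0, 1]. -/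
/-!
**Statement 15.**  Let `ψ(x) = x - tan x` on `(-π/2, π/2)` and let `Ψ` be the induced
static operator on the set `D ⊆ L²([0,∞); ℝ)` of signals with values in `(-π/2, π/2)`.
Then `Ψ⁻¹` (the unity negative feedback interconnection of `N(u)(t) = -arctan (u t)`)
has infinite incremental gain: for every `γ > 0` there exist `y₁, y₂ ∈ D` with
`Ψy₁, Ψy₂ ∈ L²`, `Ψy₁ ≠ Ψy₂` and `‖y₁ - y₂‖ > γ ‖Ψy₁ - Ψy₂‖`; moreover `y₁, y₂` may be
chosen as constant multiples of the indicator function of `[0, 1]`.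
-/

open MeasureTheory Real

noncomputable section

/-- Lebesgue measure restricted to `[0, ∞)`. -/
def mu0 : Measure ℝ := volume.restrict (Set.Ici 0)

/-- `L²` membership. -/
def InL2 (u : ℝ → ℝ) : Prop := MemLp u 2 mu0

/-- `ψ(x) = x - tan x`. -/
def psi (x : ℝ) : ℝ := x - Real.tan x

/-- The static operator `(Ψ y)(t) = ψ (y t)`. -/
def Psi (y : ℝ → ℝ) : ℝ → ℝ := fun t => psi (y t)

lemma tan_sub_le_cube {a : ℝ} (h0 : 0 ≤ a) (h1 : a ≤ 1/2) :
    Real.tan a - a ≤ a ^ 3 := by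
  have hcos : Real.cos a ≥ 1 - a ^ 2 / 2 := Real.one_sub_sq_div_two_le_cos
  have hcospos : 0 < Real.cos a := by nlinarith
  have hsin : Real.sin a ≤ a := Real.sin_le h0
  have htan : Real.tan a * Real.cos a = Real.sin a := by
    rw [Real.tan_eq_sin_div_cos]; field_simp
  have hpos : 0 ≤ a + a ^ 3 := by positivity
  have h5 : (a + a ^ 3) * (1 - a ^ 2 / 2) ≤ (a + a ^ 3) * Real.cos a := by nlinarith
  have h6 : a ≤ (a + a ^ 3) * (1 - a ^ 2 / 2) := by nlinarith [mul_nonneg (pow_nonneg h0 3) (by nlinarith : (0:ℝ) ≤ 1 - a ^ 2)]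
  have h7 : Real.tan a * Real.cos a ≤ (a + a ^ 3) * Real.cos a := by linarith
  have := (mul_le_mul_iff_of_pos_right hcospos).mp h7
  linarith

lemma mu0_Icc : mu0 (Set.Icc (0:ℝ) 1) = 1 := by
  rw [mu0, Measure.restrict_apply measurableSet_Icc]
  have : Set.Icc (0:ℝ) 1 ∩ Set.Ici 0 = Set.Icc 0 1 := by
    ext x; simp (config := {contextual := true}) [and_assoc]
  rw [this, Real.volume_Icc]
  norm_num

lemma eLpNorm_ind (c : ℝ) :
    eLpNorm (Set.indicator (Set.Icc (0:ℝ) 1) (fun _ => c)) 2 mu0 =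
      ENNReal.ofReal |c| := by
  rw [eLpNorm_indicator_const measurableSet_Icc (by norm_num) (by norm_num), mu0_Icc]
  simp [Real.enorm_eq_ofReal_abs]

theorem psi_inv_infinite_incremental_gain :
    ∀ γ : ℝ, 0 < γ → ∃ y₁ y₂ : ℝ → ℝ,
      -- `y₁, y₂` are constant multiples of the indicator function of `[0, 1]`
      (∃ a b : ℝ, y₁ = Set.indicator (Set.Icc (0 : ℝ) 1) (fun _ => a) ∧
                  y₂ = Set.indicator (Set.Icc (0 : ℝ) 1) (fun _ => b)) ∧
      -- `y₁, y₂ ∈ D`: they lie in `L²` and take values in `(-π/2, π/2)`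
      InL2 y₁ ∧ InL2 y₂ ∧
      (∀ t, y₁ t ∈ Set.Ioo (-(π / 2)) (π / 2)) ∧
      (∀ t, y₂ t ∈ Set.Ioo (-(π / 2)) (π / 2)) ∧
      -- `Ψy₁, Ψy₂ ∈ L²` and `Ψy₁ ≠ Ψy₂`
      InL2 (Psi y₁) ∧ InL2 (Psi y₂) ∧ ¬ Psi y₁ =ᵐ[mu0] Psi y₂ ∧
      -- `‖y₁ - y₂‖ > γ ‖Ψy₁ - Ψy₂‖`
      ENNReal.ofReal γ * eLpNorm (Psi y₁ - Psi y₂) 2 mu0 <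
        eLpNorm (y₁ - y₂) 2 mu0 := by
  intro γ hγ
  set a : ℝ := min (1/2) (1/(γ+1)) with ha_def
  have ha0 : 0 < a := by
    apply lt_min (by norm_num)
    positivity
  have ha_half : a ≤ 1/2 := min_le_left _ _
  have ha_γ : a ≤ 1/(γ+1) := min_le_right _ _
  have hpi : a < π / 2 := lt_of_le_of_lt ha_half (by
    nlinarith [Real.pi_gt_three])
  have hmem0 : (0:ℝ) ∈ Set.Ioo (-(π / 2)) (π / 2) := by
    constructor <;> nlinarith [Real.pi_gt_three]
  have hmema : a ∈ Set.Ioo (-(π / 2)) (π / 2) := by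
    constructor
    · nlinarith [Real.pi_gt_three]
    · exact hpi
  have htan : a < Real.tan a := Real.lt_tan ha0 hpi
  have hpsia_neg : psi a < 0 := by simp [psi]; linarith
  have hpsi0 : psi 0 = 0 := by simp [psi]
  -- the key numeric inequality
  have hkey : γ * (Real.tan a - a) < a := by
    have hcube := tan_sub_le_cube ha0.le ha_half
    have hγa2 : γ * a ^ 2 < 1 := by
      have haγ1 : a * (γ + 1) ≤ 1 := (le_div_iff₀ (by linarith)).mp ha_γ
      have hnn : 0 ≤ a * (γ + 1) := mul_nonneg ha0.le (by linarith)
      have hsq : a ^ 2 * (γ + 1) ^ 2 ≤ 1 := by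
        nlinarith [mul_le_mul haγ1 haγ1 hnn zero_le_one]
      nlinarith [mul_pos ha0 ha0]
    nlinarith
  set y₁ : ℝ → ℝ := Set.indicator (Set.Icc (0:ℝ) 1) (fun _ => a) with hy₁
  set y₂ : ℝ → ℝ := Set.indicator (Set.Icc (0:ℝ) 1) (fun _ => (0:ℝ)) with hy₂
  have hy₂0 : y₂ = fun _ => 0 := by
    funext t; simp [hy₂, Set.indicator]
  have hPsi₁ : Psi y₁ = Set.indicator (Set.Icc (0:ℝ) 1) (fun _ => psi a) := by
    funext t
    by_cases ht : t ∈ Set.Icc (0:ℝ) 1 <;>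
      simp [Psi, hy₁, Set.indicator, ht, hpsi0]
  have hPsi₂ : Psi y₂ = fun _ => (0:ℝ) := by
    funext t; simp [Psi, hy₂0, hpsi0]
  have hind_mem : ∀ c : ℝ,
      MemLp (Set.indicator (Set.Icc (0:ℝ) 1) (fun _ => c)) 2 mu0 := by
    intro c
    exact memLp_indicator_const 2 measurableSet_Icc c
      (Or.inr (by rw [mu0_Icc]; exact ENNReal.one_ne_top))
  refine ⟨y₁, y₂, ⟨a, 0, rfl, rfl⟩, hind_mem a, hind_mem 0, ?_, ?_, ?_, ?_, ?_, ?_⟩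
  · intro t
    by_cases ht : t ∈ Set.Icc (0:ℝ) 1 <;> simp [hy₁, Set.indicator, ht, hmema, hmem0]
  · intro t; rw [hy₂0]; exact hmem0
  · rw [hPsi₁]; exact hind_mem _
  · rw [hPsi₂, ← hy₂0]
    exact hind_mem 0
  · -- not a.e. equal
    intro h
    rw [hPsi₁, hPsi₂] at h
    have hsub : Set.Icc (0:ℝ) 1 ⊆ {t | Set.indicator (Set.Icc (0:ℝ) 1)
        (fun _ => psi a) t ≠ (fun _ => (0:ℝ)) t} := by
      intro t ht
      simp only [Set.mem_setOf_eq, Set.indicator_of_mem ht]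
      exact hpsia_neg.ne
    have h0 : mu0 (Set.Icc (0:ℝ) 1) = 0 :=
      measure_mono_null hsub h
    rw [mu0_Icc] at h0
    exact one_ne_zero h0
  · have h1 : Psi y₁ - Psi y₂ = Set.indicator (Set.Icc (0:ℝ) 1) (fun _ => psi a) := by
      rw [hPsi₁, hPsi₂]; funext t; simp
    have h2 : y₁ - y₂ = Set.indicator (Set.Icc (0:ℝ) 1) (fun _ => a) := by
      rw [hy₂0]; funext t; simp [hy₁]
    rw [h1, h2, eLpNorm_ind, eLpNorm_ind,
      ← ENNReal.ofReal_mul hγ.le]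
    rw [ENNReal.ofReal_lt_ofReal_iff (by rw [abs_of_pos ha0]; exact ha0)]
    rw [abs_of_neg hpsia_neg, abs_of_pos ha0]
    simp only [psi]
    linarith [hkey]

end
end
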